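/- Deleting any single edge from a cycle C_n with n ≥ 5 leaves a graph containing an induced path on 4 vertices; hence at least two edge edits are needed to make C_n (n ≥ 5) a starforest, and more generally at least ⌈n/3⌉ deletions are needed. -/

import Mathlib

open SimpleGraph

/-- The graph obtained from `G` by toggling (adding/deleting) the edges in `F`. -/
def editedGraph {V : Type*} (G : SimpleGraph V) (F : Set (Sym2 V)) : SimpleGraph V :=
  SimpleGraph.fromEdgeSet (symmDiff G.edgeSet F)

/-- A graph is a starforest: every connected component is a star, i.e. has a center
adjacent to all other vertices of the component, the non-center vertices being
pairwise non-adjacent. -/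
def IsStarGraph {V : Type*} (H : SimpleGraph V) : Prop :=
  ∀ c : H.ConnectedComponent, ∃ ctr ∈ c.supp,
    (∀ v ∈ c.supp, v ≠ ctr → H.Adj ctr v) ∧
    (∀ u ∈ c.supp, ∀ v ∈ c.supp, u ≠ ctr → v ≠ ctr → ¬ H.Adj u v)

/-- A graph is a disjoint union of complete `t`-partite graphs: there is a colouring
with at most `t` colours such that two distinct vertices in the same connected
component are adjacent iff they get different colours. -/
def IsTPartiteCluster {V : Type*} (t : ℕ) (H : SimpleGraph V) : Prop :=
  ∃ f : V → Fin t, ∀ u v : V, u ≠ v → H.Reachable u v → (H.Adj u v ↔ f u ≠ f v)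

open Fin.NatCast Fin.CommRing

private lemma cast_eq_iff {m a b : ℕ} (ha : a ≤ 5) (hb : b ≤ 5) :
    ((a : Fin (m+5)) = (b : Fin (m+5))) ↔
      (a = b ∨ (a = 0 ∧ b = 5 ∧ m = 0) ∨ (a = 5 ∧ b = 0 ∧ m = 0)) := by
  rw [Fin.ext_iff, Fin.val_natCast, Fin.val_natCast]
  rcases m with _ | k
  · omega
  · rw [Nat.mod_eq_of_lt (by omega), Nat.mod_eq_of_lt (by omega)]
    omega

private lemma point_eq {m : ℕ} (x : Fin (m+5)) {a b : ℕ} (ha : a ≤ 5) (hb : b ≤ 5) :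
    x + (a : Fin (m+5)) = x + (b : Fin (m+5)) ↔
      (a = b ∨ (a = 0 ∧ b = 5 ∧ m = 0) ∨ (a = 5 ∧ b = 0 ∧ m = 0)) := by
  rw [add_right_inj, cast_eq_iff ha hb]

private lemma adj_iff {m : ℕ} (x : Fin (m+5)) {a b : ℕ} (ha : a ≤ 4) (hb : b ≤ 4) :
    (cycleGraph (m+5)).Adj (x + (a : Fin (m+5))) (x + (b : Fin (m+5))) ↔
      (a = b + 1 ∨ b = a + 1 ∨ (a = 0 ∧ b = 4 ∧ m = 0) ∨ (b = 0 ∧ a = 4 ∧ m = 0)) := by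
  have h1 : (x + (a : Fin (m+5))) - (x + (b : Fin (m+5))) = (a : Fin (m+5)) - b := by ring
  have h2 : (x + (b : Fin (m+5))) - (x + (a : Fin (m+5))) = (b : Fin (m+5)) - a := by ring
  have e1 : ((a : Fin (m+5)) - b = 1) ↔ (a = b + 1 ∨ (a = 0 ∧ b = 4 ∧ m = 0)) := by
    rw [sub_eq_iff_eq_add,
      show (1 : Fin (m+5)) + (b : Fin (m+5)) = ((b+1 : ℕ) : Fin (m+5)) by push_cast; ring,
      cast_eq_iff (by omega) (by omega)]
    omega
  have e2 : ((b : Fin (m+5)) - a = 1) ↔ (b = a + 1 ∨ (b = 0 ∧ a = 4 ∧ m = 0)) := by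
    rw [sub_eq_iff_eq_add,
      show (1 : Fin (m+5)) + (a : Fin (m+5)) = ((a+1 : ℕ) : Fin (m+5)) by push_cast; ring,
      cast_eq_iff (by omega) (by omega)]
    omega
  rw [cycleGraph_adj, h1, h2, e1, e2]
  tauto

private lemma emb_lemma {m : ℕ} (j : Fin (m+5)) :
    Nonempty (SimpleGraph.pathGraph 4 ↪g
      (SimpleGraph.cycleGraph (m+5)).deleteEdges {s(j, j+1)}) := by
  have hs : s(j, j + 1) = s(j + ((0:ℕ) : Fin (m+5)), j + ((1:ℕ) : Fin (m+5))) := by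
    norm_num
  refine ⟨⟨⟨fun k => j + ((k.val + 1 : ℕ) : Fin (m+5)), ?_⟩, ?_⟩⟩
  · intro a b hab
    simp only at hab
    rw [point_eq j (by omega) (by omega)] at hab
    have ha := a.isLt; have hb := b.isLt
    exact Fin.ext (by omega)
  · intro a b
    show ((cycleGraph (m+5)).deleteEdges {s(j, j+1)}).Adj (j + ((a.val + 1 : ℕ) : Fin (m+5)))
      (j + ((b.val + 1 : ℕ) : Fin (m+5))) ↔ (pathGraph 4).Adj a b
    have ha := a.isLt; have hb := b.isLt
    simp only [RelEmbedding.coe_mk, Function.Embedding.coeFn_mk, deleteEdges_adj, Set.mem_singleton_iff,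
      pathGraph_adj]
    constructor
    · rintro ⟨hadj, -⟩
      rw [adj_iff j (by omega) (by omega)] at hadj
      omega
    · intro hp
      refine ⟨(adj_iff j (by omega) (by omega)).mpr (by omega), ?_⟩
      intro hcon
      rw [hs, Sym2.eq_iff] at hcon
      rcases hcon with ⟨h1, h2⟩ | ⟨h1, h2⟩
      · rw [point_eq j (by omega) (by omega)] at h1
        omega
      · rw [point_eq j (by omega) (by omega)] at h2
        omega

private lemma card_le_three {α : Type*} [DecidableEq α] (a b c : α) :
    ({a, b, c} : Finset α).card ≤ 3 := by
  apply le_trans (Finset.card_insert_le _ _)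
  have : ({b, c} : Finset α).card ≤ 2 := by
    apply le_trans (Finset.card_insert_le _ _)
    simp
  omega

/-- Deleting any single edge from a cycle `C_n` with `n ≥ 5` leaves an induced
`P₄`; hence any set of deletions turning `C_n` into a starforest has size at
least `2`, and more generally at least `⌈n/3⌉`. -/
theorem cycle_deletion_lower_bound (n : ℕ) (hn : 5 ≤ n) :
    (∀ e ∈ (SimpleGraph.cycleGraph n).edgeSet,
      Nonempty (SimpleGraph.pathGraph 4 ↪g
        (SimpleGraph.cycleGraph n).deleteEdges {e})) ∧
    (∀ D : Set (Sym2 (Fin n)), D ⊆ (SimpleGraph.cycleGraph n).edgeSet →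
      IsStarGraph ((SimpleGraph.cycleGraph n).deleteEdges D) →
      2 ≤ D.ncard ∧ (n + 2) / 3 ≤ D.ncard) := by
  obtain ⟨m, rfl⟩ : ∃ m, n = m + 5 := ⟨n - 5, by omega⟩
  constructor
  · intro e he
    induction e with
    | _ u v =>
      rw [mem_edgeSet, cycleGraph_adj] at he
      rcases he with h | h
      · -- u - v = 1, so u = v + 1, e = s(v+1, v) = s(v, v+1)
        have hu : u = v + 1 := by rw [sub_eq_iff_eq_add] at h; rw [h]; ring
        subst hu
        rw [Sym2.eq_swap]
        exact emb_lemma v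
      · have hv : v = u + 1 := by rw [sub_eq_iff_eq_add] at h; rw [h]; ring
        subst hv
        exact emb_lemma u
  · intro D hD hstar
    classical
    have hfin : D.Finite := Set.toFinite D
    set H := (cycleGraph (m+5)).deleteEdges D with hH
    -- Key: among any three consecutive edges, one is deleted
    have key : ∀ j : Fin (m+5), ∃ k : ℕ, k ≤ 2 ∧
        s(j + (k : Fin (m+5)), j + ((k+1 : ℕ) : Fin (m+5))) ∈ D := by
      intro j
      by_contra hcon
      push_neg at hcon
      have hadj : ∀ k : ℕ, k ≤ 2 → H.Adj (j + (k : Fin (m+5))) (j + ((k+1 : ℕ) : Fin (m+5))) := by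
        intro k hk
        rw [hH, deleteEdges_adj]
        exact ⟨(adj_iff j (by omega) (by omega)).mpr (by omega), hcon k hk⟩
      set c := H.connectedComponentMk (j + ((0:ℕ) : Fin (m+5))) with hc
      have hsupp : ∀ k : ℕ, k ≤ 3 → (j + (k : Fin (m+5))) ∈ c.supp := by
        intro k hk
        rw [ConnectedComponent.mem_supp_iff]
        interval_cases k
        · rfl
        · exact (ConnectedComponent.sound (hadj 0 (by omega)).reachable).symm
        · exact ((ConnectedComponent.sound (hadj 1 (by omega)).reachable).symm).trans
            (ConnectedComponent.sound (hadj 0 (by omega)).reachable).symm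
        · exact (((ConnectedComponent.sound (hadj 2 (by omega)).reachable).symm).trans
            ((ConnectedComponent.sound (hadj 1 (by omega)).reachable).symm)).trans
            (ConnectedComponent.sound (hadj 0 (by omega)).reachable).symm
      have hne : ∀ a b : ℕ, a ≤ 3 → b ≤ 3 → a ≠ b →
          j + (a : Fin (m+5)) ≠ j + (b : Fin (m+5)) := by
        intro a b ha hb hab h
        rw [point_eq j (by omega) (by omega)] at h
        omega
      obtain ⟨ctr, hmem, hstar1, hstar2⟩ := hstar c
      have h01 := hadj 0 (by omega)
      have h12 := hadj 1 (by omega)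
      have h23 := hadj 2 (by omega)
      have hctr : ctr = j + ((1:ℕ) : Fin (m+5)) ∨ ctr = j + ((2:ℕ) : Fin (m+5)) := by
        by_contra hcc
        push_neg at hcc
        exact hstar2 _ (hsupp 1 (by omega)) _ (hsupp 2 (by omega))
          (Ne.symm hcc.1) (Ne.symm hcc.2) h12
      rcases hctr with h | h
      · exact hstar2 _ (hsupp 2 (by omega)) _ (hsupp 3 (by omega))
          (h ▸ hne 2 1 (by omega) (by omega) (by omega))
          (h ▸ hne 3 1 (by omega) (by omega) (by omega)) h23
      · exact hstar2 _ (hsupp 0 (by omega)) _ (hsupp 1 (by omega))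
          (h ▸ hne 0 2 (by omega) (by omega) (by omega))
          (h ▸ hne 1 2 (by omega) (by omega) (by omega)) h01
    -- Counting
    let S : Finset (Fin (m+5)) := Finset.univ.filter (fun j => s(j, j+1) ∈ D)
    have hSD : S.card ≤ D.ncard := by
      rw [Set.ncard_eq_toFinset_card D hfin]
      apply Finset.card_le_card_of_injOn (fun j => s(j, j+1))
      · intro j hj
        rw [Finset.mem_coe, Set.Finite.mem_toFinset]
        exact (Finset.mem_filter.mp hj).2
      · intro a _ b _ hab
        simp only [Sym2.eq_iff] at hab
        rcases hab with ⟨h1, _⟩ | ⟨h1, h2⟩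
        · exact h1
        · exfalso
          have : b + ((2:ℕ) : Fin (m+5)) = b + ((0:ℕ) : Fin (m+5)) := by
            push_cast
            linear_combination h2 - h1
          rw [point_eq b (by omega) (by omega)] at this
          omega
    have hcover : (Finset.univ : Finset (Fin (m+5))) ⊆
        S.biUnion (fun j => ({j, j - ((1:ℕ) : Fin (m+5)), j - ((2:ℕ) : Fin (m+5))} : Finset _)) := by
      intro i _
      obtain ⟨k, hk, hkD⟩ := key i
      have hS : i + (k : Fin (m+5)) ∈ S := by
        rw [Finset.mem_filter]
        refine ⟨Finset.mem_univ _, ?_⟩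
        have : i + (k : Fin (m+5)) + 1 = i + ((k+1 : ℕ) : Fin (m+5)) := by push_cast; ring
        rw [this]
        exact hkD
      rw [Finset.mem_biUnion]
      refine ⟨i + (k : Fin (m+5)), hS, ?_⟩
      interval_cases k
      · simp
      · exact Finset.mem_insert_of_mem (Finset.mem_insert.mpr (Or.inl (by ring)))
      · exact Finset.mem_insert_of_mem (Finset.mem_insert_of_mem
          (Finset.mem_singleton.mpr (by ring)))
    have hcard : m + 5 ≤ 3 * S.card := by
      have h1 : (Finset.univ : Finset (Fin (m+5))).card = m + 5 := by simp
      have h2 := Finset.card_le_card hcover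
      have h3 := Finset.card_biUnion_le (s := S)
        (t := fun j => ({j, j - ((1:ℕ) : Fin (m+5)), j - ((2:ℕ) : Fin (m+5))} : Finset _))
      have h4 : ∑ j ∈ S, ({j, j - ((1:ℕ) : Fin (m+5)), j - ((2:ℕ) : Fin (m+5))} : Finset _).card
          ≤ ∑ _j ∈ S, 3 := Finset.sum_le_sum (fun j _ => card_le_three _ _ _)
      rw [Finset.sum_const, smul_eq_mul] at h4
      omega
    have : m + 5 ≤ 3 * D.ncard := by omega
    omega
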